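/- Let N ≥ 2 be an integer, b ∈ ℝ², and let f : ℝ² → ℝ be continuously differentiable. Let h(ξ) = |ξ + b|² and k(ξ) = |ξ|². Then the polygon–center operator intertwines the shifted and unshifted rotation generators: for every ξ ∈ ℝ², Σ_{l=1}^{N} {h, f}(Q_l ξ − b) = {k, V_b f}(ξ), i.e. V_b({|T_b ·|², f}) = {|·|², V_b f} pointwise. -/

import Mathlib

open Real Finset

/-- The Poisson bracket `{g, f} = ∂₁g ∂₂f - ∂₂g ∂₁f` on the plane identified with `ℂ`,
where `∂₁` (resp. `∂₂`) is the derivative in the direction `1` (resp. `I`). -/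
noncomputable def pb (g f : ℂ → ℝ) (x : ℂ) : ℝ :=
  fderiv ℝ g x 1 * fderiv ℝ f x Complex.I - fderiv ℝ g x Complex.I * fderiv ℝ f x 1

/-- The polygon–center operator `(V_b f)(ξ) = ∑_{l=1}^{N} f(Q_l ξ - b)`, where the
rotation `Q_l` by angle `2πl/N` is multiplication by `exp(2πi/N)^l`. -/
noncomputable def Vop (N : ℕ) (b : ℂ) (f : ℂ → ℝ) (ξ : ℂ) : ℝ :=
  ∑ l ∈ Finset.Icc 1 N, f ((Complex.exp (2 * π * Complex.I / N)) ^ l * ξ - b)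

private lemma fderiv_shift_normsq (b x v : ℂ) :
    fderiv ℝ (fun η : ℂ => ‖η + b‖^2) x v = 2*(x+b).re*v.re + 2*(x+b).im*v.im := by
  have h1 : HasFDerivAt (fun η : ℂ => η + b) (ContinuousLinearMap.id ℝ ℂ) x :=
    (hasFDerivAt_id x).add_const b
  have hre : HasFDerivAt (fun η : ℂ => (η + b).re) (Complex.reCLM.comp (ContinuousLinearMap.id ℝ ℂ)) x :=
    Complex.reCLM.hasFDerivAt.comp x h1
  have him : HasFDerivAt (fun η : ℂ => (η + b).im) (Complex.imCLM.comp (ContinuousLinearMap.id ℝ ℂ)) x :=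
    Complex.imCLM.hasFDerivAt.comp x h1
  have h2 := ((hre.fun_mul hre).fun_add (him.fun_mul him))
  have heq : (fun η : ℂ => ‖η + b‖^2) = fun η : ℂ => (η + b).re * (η + b).re + (η + b).im * (η + b).im := by
    funext η
    rw [← Complex.normSq_apply, Complex.normSq_eq_norm_sq]
  rw [heq, h2.fderiv]
  simp
  ring

private lemma D_trick (D : ℂ →L[ℝ] ℝ) (z : ℂ) :
    2*z.re * D Complex.I - 2*z.im * D 1 = 2 * D (Complex.I * z) := by
  have h : Complex.I * z = z.re • Complex.I - z.im • (1:ℂ) := by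
    apply Complex.ext <;> simp [Complex.real_smul] <;> ring
  rw [h, map_sub, map_smul, map_smul]
  simp
  ring

private lemma term_hasFDerivAt (f : ℂ → ℝ) (hf : ContDiff ℝ 1 f) (c b ξ : ℂ) :
    HasFDerivAt (fun ξ : ℂ => f (c * ξ - b))
      ((fderiv ℝ f (c * ξ - b)).comp (ContinuousLinearMap.mul ℝ ℂ c)) ξ := by
  have h1 : HasFDerivAt (fun ξ : ℂ => c * ξ - b) (ContinuousLinearMap.mul ℝ ℂ c) ξ := by
    simpa using (((ContinuousLinearMap.mul ℝ ℂ c).hasFDerivAt (x := ξ)).sub_const b)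
  exact ((hf.differentiable one_ne_zero (c * ξ - b)).hasFDerivAt).comp ξ h1

/-- The polygon–center operator intertwines the shifted and unshifted rotation
generators: `V_b({|T_b ·|², f}) = {|·|², V_b f}` pointwise, for `f` of class `C¹`. -/
theorem Vop_intertwines_rotation_generators
    (N : ℕ) (hN : 2 ≤ N) (b : ℂ) (f : ℂ → ℝ) (hf : ContDiff ℝ 1 f) :
    ∀ ξ : ℂ,
      (∑ l ∈ Finset.Icc 1 N,
        pb (fun η => ‖η + b‖ ^ 2) f
          ((Complex.exp (2 * π * Complex.I / N)) ^ l * ξ - b)) =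
      pb (fun η => ‖η‖ ^ 2) (Vop N b f) ξ := by
  intro ξ
  set ω : ℂ := Complex.exp (2 * π * Complex.I / N) with hω
  -- derivative of Vop
  have hVop : HasFDerivAt (Vop N b f)
      (∑ l ∈ Finset.Icc 1 N, (fderiv ℝ f (ω ^ l * ξ - b)).comp (ContinuousLinearMap.mul ℝ ℂ (ω ^ l))) ξ := by
    have : Vop N b f = fun ξ => ∑ l ∈ Finset.Icc 1 N, f (ω ^ l * ξ - b) := rfl
    rw [this]
    exact HasFDerivAt.fun_sum fun l _ => term_hasFDerivAt f hf (ω ^ l) b ξ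
  have hk : ∀ v : ℂ, fderiv ℝ (fun η : ℂ => ‖η‖^2) ξ v = 2*ξ.re*v.re + 2*ξ.im*v.im := by
    intro v
    have := fderiv_shift_normsq 0 ξ v
    simpa using this
  have hV : ∀ v : ℂ, fderiv ℝ (Vop N b f) ξ v
      = ∑ l ∈ Finset.Icc 1 N, fderiv ℝ f (ω ^ l * ξ - b) (ω ^ l * v) := by
    intro v
    rw [hVop.fderiv]
    simp
  -- compute both sides
  unfold pb
  rw [hk, hk, hV, hV]
  simp only [Complex.one_re, Complex.one_im, Complex.I_re, Complex.I_im]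
  rw [Finset.mul_sum, Finset.mul_sum, ← Finset.sum_sub_distrib]
  apply Finset.sum_congr rfl
  intro l _
  set D : ℂ →L[ℝ] ℝ := fderiv ℝ f (ω ^ l * ξ - b) with hD
  rw [fderiv_shift_normsq, fderiv_shift_normsq]
  simp only [Complex.one_re, Complex.one_im, Complex.I_re, Complex.I_im, sub_add_cancel,
    mul_one, mul_zero, add_zero, zero_add]
  rw [D_trick D (ω ^ l * ξ)]
  have h2 := D_trick (D.comp (ContinuousLinearMap.mul ℝ ℂ (ω ^ l))) ξ
  simp only [ContinuousLinearMap.comp_apply, ContinuousLinearMap.mul_apply'] at h2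
  rw [mul_one] at h2
  rw [h2]
  have harg : ω ^ l * (Complex.I * ξ) = Complex.I * (ω ^ l * ξ) := by ring
  rw [harg]
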